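/- Let F:[0,1]^n → ℝ≥0 be differentiable and γ-weakly DR-submodular for γ ∈ (0,1]. Suppose x ∈ [0,1]^n satisfies the local-optimality condition ⟨y − x, ∇F(x)⟩ ≤ 0 for a given y ∈ [0,1]^n. Then F(x) ≥ (γ²·F(x ∨ y) + F(x ∧ y)) / (1 + γ²), where ∨ and ∧ denote componentwise max and min. -/

import Mathlib

open Set

private lemma cmp_lin {n : ℕ} (L1 L2 : (Fin n → ℝ) →L[ℝ] ℝ) (d : Fin n → ℝ) (hd : 0 ≤ d)
    (h : ∀ i, L1 (Pi.single i 1) ≤ L2 (Pi.single i 1)) : L1 d ≤ L2 d := by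
  have e : ∀ (L : (Fin n → ℝ) →L[ℝ] ℝ), L d = ∑ i, d i * L (Pi.single i 1) := by
    intro L
    conv_lhs => rw [pi_eq_sum_univ d, map_sum]
    simp only [map_smul, smul_eq_mul]
    refine Finset.sum_congr rfl fun i _ => ?_
    congr 2
    funext j
    simp [Pi.single_apply, eq_comm]
  rw [e L1, e L2]
  exact Finset.sum_le_sum fun i _ => mul_le_mul_of_nonneg_left (h i) (hd i)

private lemma seg {n : ℕ} {F : (Fin n → ℝ) → ℝ} (hF : Differentiable ℝ F)
    (a d : Fin n → ℝ) (C : ℝ)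
    (hb : ∀ t ∈ Icc (0:ℝ) 1, fderiv ℝ F (a + t • d) d ≤ C) :
    F (a + d) - F a ≤ C := by
  set g : ℝ → ℝ := fun t => C * t - F (a + t • d) with hg
  have hg' : ∀ t : ℝ, HasDerivAt g (C - fderiv ℝ F (a + t • d) d) t := by
    intro t
    have hpath : HasDerivAt (fun t : ℝ => a + t • d) d t := by
      simpa using ((hasDerivAt_id t).smul_const d).const_add a
    have h1 : HasDerivAt (fun t : ℝ => F (a + t • d)) (fderiv ℝ F (a + t • d) d) t :=
      (hF _).hasFDerivAt.comp_hasDerivAt t hpath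
    have h2 := ((hasDerivAt_id t).const_mul C).sub h1
    rw [mul_one] at h2
    exact h2
  have hdiff : Differentiable ℝ g := fun t => (hg' t).differentiableAt
  have hmono : MonotoneOn g (Icc (0:ℝ) 1) := by
    apply monotoneOn_of_deriv_nonneg (convex_Icc 0 1) hdiff.continuous.continuousOn
      hdiff.differentiableOn
    intro t ht
    rw [interior_Icc] at ht
    rw [(hg' t).deriv]
    have := hb t ⟨le_of_lt ht.1, le_of_lt ht.2⟩
    linarith
  have h01 := hmono (left_mem_Icc.mpr zero_le_one) (right_mem_Icc.mpr zero_le_one) zero_le_one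
  simp only [hg, zero_smul, add_zero, one_smul, mul_zero, mul_one] at h01
  linarith

theorem stmt6 (n : ℕ) (γ : ℝ) (hγ0 : 0 < γ) (hγ1 : γ ≤ 1)
    (F : (Fin n → ℝ) → ℝ)
    (hF : Differentiable ℝ F)
    (hnonneg : ∀ x ∈ Icc (0 : Fin n → ℝ) 1, 0 ≤ F x)
    (hDR : ∀ x ∈ Icc (0 : Fin n → ℝ) 1, ∀ y ∈ Icc (0 : Fin n → ℝ) 1,
      x ≤ y → ∀ i, γ * fderiv ℝ F y (Pi.single i 1) ≤ fderiv ℝ F x (Pi.single i 1))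
    (x y : Fin n → ℝ) (hx : x ∈ Icc (0 : Fin n → ℝ) 1) (hy : y ∈ Icc (0 : Fin n → ℝ) 1)
    (hloc : fderiv ℝ F x (y - x) ≤ 0) :
    (γ ^ 2 * F (x ⊔ y) + F (x ⊓ y)) / (1 + γ ^ 2) ≤ F x := by
  obtain ⟨hx0, hx1⟩ := hx
  obtain ⟨hy0, hy1⟩ := hy
  set s := x ⊔ y with hs
  set m := x ⊓ y with hm
  have hxIcc : x ∈ Icc (0 : Fin n → ℝ) 1 := ⟨hx0, hx1⟩
  have hsm : s + m = x + y := by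
    funext i
    exact max_add_min (x i) (y i)
  have hd1 : (0 : Fin n → ℝ) ≤ s - x := fun i => by
    simp only [Pi.sub_apply, Pi.zero_apply, sub_nonneg]; exact le_max_left _ _
  have hd2 : (0 : Fin n → ℝ) ≤ x - m := fun i => by
    simp only [Pi.sub_apply, Pi.zero_apply, sub_nonneg]; exact min_le_left _ _
  set L := fderiv ℝ F x with hL
  -- upper bound for F s
  have hFs : F s - F x ≤ γ⁻¹ * L (s - x) := by
    have := seg hF x (s - x) (γ⁻¹ * L (s - x)) ?_
    · simpa using this
    intro t ht
    set z := x + t • (s - x) with hz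
    have hxz : x ≤ z := fun i => by
      have : 0 ≤ t * (s i - x i) := mul_nonneg ht.1 (hd1 i)
      simp only [hz, Pi.add_apply, Pi.smul_apply, smul_eq_mul, le_add_iff_nonneg_right]
      simpa using this
    have hzs : z ≤ s := fun i => by
      have h1 : t * (s i - x i) ≤ 1 * (s i - x i) :=
        mul_le_mul_of_nonneg_right ht.2 (hd1 i)
      simp only [hz, Pi.add_apply, Pi.smul_apply, Pi.sub_apply, smul_eq_mul]
      nlinarith [hd1 i]
    have hzIcc : z ∈ Icc (0 : Fin n → ℝ) 1 :=
      ⟨le_trans hx0 hxz, le_trans hzs (sup_le hx1 hy1)⟩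
    have hcmp : fderiv ℝ F z (s - x) ≤ (γ⁻¹ • L) (s - x) := by
      apply cmp_lin _ _ _ hd1
      intro i
      have := hDR x hxIcc z hzIcc hxz i
      have h2 : fderiv ℝ F z (Pi.single i 1) ≤ γ⁻¹ * L (Pi.single i 1) :=
        (le_inv_mul_iff₀ hγ0).mpr this
      simpa using h2
    simpa using hcmp
  -- lower bound for F x - F m
  have hFm : F m - F x ≤ -(γ * L (x - m)) := by
    have key := seg (F := fun z => -F z) hF.neg m (x - m) (-(γ * L (x - m))) ?_
    · have hxm : m + (x - m) = x := by ring
      rw [hxm] at key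
      linarith [key]
    intro t ht
    set z := m + t • (x - m) with hz
    have hmz : m ≤ z := fun i => by
      have : 0 ≤ t * (x i - m i) := mul_nonneg ht.1 (hd2 i)
      simp only [hz, Pi.add_apply, Pi.smul_apply, smul_eq_mul, le_add_iff_nonneg_right]
      simpa using this
    have hzx : z ≤ x := fun i => by
      have h1 : t * (x i - m i) ≤ 1 * (x i - m i) :=
        mul_le_mul_of_nonneg_right ht.2 (hd2 i)
      simp only [hz, Pi.add_apply, Pi.smul_apply, Pi.sub_apply, smul_eq_mul]
      nlinarith [hd2 i]
    have hzIcc : z ∈ Icc (0 : Fin n → ℝ) 1 :=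
      ⟨le_trans (le_inf hx0 hy0) hmz, le_trans hzx hx1⟩
    have hcmp : (γ • L) (x - m) ≤ fderiv ℝ F z (x - m) := by
      apply cmp_lin _ _ _ hd2
      intro i
      have := hDR z hzIcc x hxIcc hzx i
      simpa using this
    have hfneg : fderiv ℝ (fun z => -F z) z = -(fderiv ℝ F z) := fderiv_neg
    rw [hfneg]
    simp only [ContinuousLinearMap.neg_apply]
    have : γ * L (x - m) ≤ fderiv ℝ F z (x - m) := by simpa using hcmp
    linarith
  -- combine
  have hsplit : L (s - x) - L (x - m) = L (y - x) := by
    rw [← map_sub]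
    congr 1
    have : s - x - (x - m) = s + m - x - x := by ring
    rw [this, hsm]; ring
  have hle : L (s - x) ≤ L (x - m) := by
    have : L (y - x) ≤ 0 := hloc
    linarith
  have hγ2 : (0:ℝ) < 1 + γ ^ 2 := by positivity
  rw [div_le_iff₀ hγ2]
  have h1 : γ ^ 2 * F s ≤ γ ^ 2 * F x + γ * L (s - x) := by
    have h := mul_le_mul_of_nonneg_left hFs (le_of_lt (by positivity : (0:ℝ) < γ ^ 2))
    have hγne : γ ≠ 0 := ne_of_gt hγ0
    have he : γ ^ 2 * (γ⁻¹ * L (s - x)) = γ * L (s - x) := by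
      generalize L (s - x) = c
      field_simp
    rw [he] at h
    linarith
  have h2 : F m ≤ F x - γ * L (x - m) := by linarith
  have h3 : γ * L (s - x) ≤ γ * L (x - m) := mul_le_mul_of_nonneg_left hle (le_of_lt hγ0)
  nlinarith
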